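/- Chandrasekhar's EC flux for the Euler equations, with z = (ρ, u, ρ/(2p)), given by f₁ = z₁^ln z̄₂, f₂ = z̄₁/(2z̄₃) + z̄₂ f₁, f₃ = (1/(2(γ−1)z₃^ln) − ½(z₂²)‾) f₁ + z̄₂ f₂, satisfies the entropy conservation condition (v_R − v_L)ᵀ f = [ρu]. -/

import Mathlib

/-- The logarithmic mean `a^ln = (y - x)/(ln y - ln x)`. -/
noncomputable def logMean (x y : ℝ) : ℝ := (y - x) / (Real.log y - Real.log x)

set_option maxHeartbeats 4000000 in
/-- Chandrasekhar's entropy conservative flux for the 1D Euler equations,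
built from `z = (ρ, u, ρ/(2p))`, satisfies the entropy conservation condition
`(v_R − v_L)ᵀ f = [ρu]`. -/
theorem chandrasekhar_EC_flux (γ ρL uL pL ρR uR pR : ℝ) (hγ : 1 < γ)
    (hρL : 0 < ρL) (hpL : 0 < pL) (hρR : 0 < ρR) (hpR : 0 < pR)
    (hz1 : ρL ≠ ρR) (hz3 : ρL / (2 * pL) ≠ ρR / (2 * pR)) :
    let z1bar := (ρL + ρR) / 2
    let z2bar := (uL + uR) / 2
    let z3bar := (ρL / (2 * pL) + ρR / (2 * pR)) / 2
    let z2sqbar := (uL ^ 2 + uR ^ 2) / 2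
    let z1ln := logMean ρL ρR
    let z3ln := logMean (ρL / (2 * pL)) (ρR / (2 * pR))
    let f1 := z1ln * z2bar
    let f2 := z1bar / (2 * z3bar) + z2bar * f1
    let f3 := (1 / (2 * (γ - 1) * z3ln) - (1 / 2) * z2sqbar) * f1 + z2bar * f2
    let SL := Real.log pL - γ * Real.log ρL
    let SR := Real.log pR - γ * Real.log ρR
    let v1L := (γ - SL) / (γ - 1) - (1 / 2) * (ρL * uL ^ 2 / pL)
    let v1R := (γ - SR) / (γ - 1) - (1 / 2) * (ρR * uR ^ 2 / pR)
    let v2L := ρL * uL / pL; let v2R := ρR * uR / pR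
    let v3L := -(ρL / pL); let v3R := -(ρR / pR)
    (v1R - v1L) * f1 + (v2R - v2L) * f2 + (v3R - v3L) * f3 =
      ρR * uR - ρL * uL := by
  have h2L : (0:ℝ) < 2 * pL := by positivity
  have h2R : (0:ℝ) < 2 * pR := by positivity
  have hz3L : (0:ℝ) < ρL / (2 * pL) := by positivity
  have hz3R : (0:ℝ) < ρR / (2 * pR) := by positivity
  have e1 : Real.log (ρL / (2 * pL)) = Real.log ρL - (Real.log 2 + Real.log pL) := by
    rw [Real.log_div hρL.ne' h2L.ne', Real.log_mul two_ne_zero hpL.ne']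
  have e2 : Real.log (ρR / (2 * pR)) = Real.log ρR - (Real.log 2 + Real.log pR) := by
    rw [Real.log_div hρR.ne' h2R.ne', Real.log_mul two_ne_zero hpR.ne']
  have hlogρ : Real.log ρR - Real.log ρL ≠ 0 := by
    intro h
    exact hz1 (Real.log_injOn_pos (Set.mem_Ioi.mpr hρL) (Set.mem_Ioi.mpr hρR)
      (by linarith))
  have hlogz3 : Real.log (ρR / (2 * pR)) - Real.log (ρL / (2 * pL)) ≠ 0 := by
    intro h
    exact hz3 (Real.log_injOn_pos (Set.mem_Ioi.mpr hz3L) (Set.mem_Ioi.mpr hz3R)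
      (by linarith))
  have hlogz3' : (Real.log ρR - (Real.log 2 + Real.log pR)) -
      (Real.log ρL - (Real.log 2 + Real.log pL)) ≠ 0 := by
    rw [← e1, ← e2]; exact hlogz3
  have hz3d : ρR / (2 * pR) - ρL / (2 * pL) ≠ 0 := sub_ne_zero.mpr (Ne.symm hz3)
  have hz3bar : ρL / (2 * pL) + ρR / (2 * pR) ≠ 0 := by positivity
  have hγ1 : γ - 1 ≠ 0 := by linarith
  have hnum : ρR * (2 * pL) - 2 * pR * ρL ≠ 0 := by
    intro h
    apply hz3
    rw [div_eq_div_iff h2L.ne' h2R.ne']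
    linarith
  simp only [logMean, e1, e2]
  set A := Real.log ρL with hA
  set B := Real.log ρR with hB
  set P := Real.log pL with hP
  set Q := Real.log pR with hQ
  set L2 := Real.log 2 with hL2
  field_simp [hlogρ, hlogz3', hz3d, hz3bar, hγ1, hnum, hpL.ne', hpR.ne',
    (show ρR * pL - pR * ρL ≠ 0 by intro h; apply hnum; linarith)]
  ring
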